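/- Let s = (s_0, ..., s_{N-1}) be a sequence of integers of period N, let P_s(x) = \sum_{i=0}^{N-1} s_i x^i in Z[x], and let A be the N×N circulant matrix with entries a_{i,j} = s_{(i-j) mod N}. If det(A) ≠ 0 (over Q), then there exist polynomials u(x), v(x) in Z[x] with deg u ≤ N-1 and deg v ≤ N-2 such that u(x)·P_s(x) + v(x)·(1 - x^N) = det(A). -/

import Mathlib

open Polynomial Matrix

private lemma aux_mk_sum (N : ℕ) [NeZero N] (f : ℤ[X]) (g : ZMod N → ℤ) :
    AdjoinRoot.mk f (∑ i ∈ Finset.range N, C (g (i : ZMod N)) * X ^ i) =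
      ∑ k : ZMod N, algebraMap ℤ (AdjoinRoot f) (g k) * (AdjoinRoot.root f) ^ (ZMod.val k) := by
  rw [map_sum]
  refine Finset.sum_nbij' (fun i => (i : ZMod N)) (fun k => ZMod.val k) ?_ ?_ ?_ ?_ ?_
  · intro i _; exact Finset.mem_univ _
  · intro k _; exact Finset.mem_range.2 (ZMod.val_lt k)
  · intro i hi
    exact ZMod.val_cast_of_lt (Finset.mem_range.1 hi)
  · intro k _; exact ZMod.natCast_rightInverse k
  · intro i hi
    rw [_root_.map_mul, AdjoinRoot.mk_C, map_pow, AdjoinRoot.mk_X,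
      ZMod.val_cast_of_lt (Finset.mem_range.1 hi)]
    rfl

theorem stmt0 (N : ℕ) [NeZero N] (s : ZMod N → ℤ)
    (hdet : (Matrix.circulant fun i : ZMod N => (s i : ℚ)).det ≠ 0) :
    ∃ u v : ℤ[X], u.natDegree ≤ N - 1 ∧ v.natDegree ≤ N - 2 ∧
      u * (∑ i ∈ Finset.range N, C (s (i : ZMod N)) * X ^ i) + v * (1 - X ^ N) =
        C (Matrix.circulant s).det := by
  classical
  have hN : 0 < N := Nat.pos_of_ne_zero (NeZero.ne N)
  set A : Matrix (ZMod N) (ZMod N) ℤ := Matrix.circulant s with hA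
  set d : ℤ := A.det with hd
  set a : ZMod N → ℤ := fun j => A.adjugate j 0 with ha
  set u : ℤ[X] := ∑ j ∈ Finset.range N, C (a (j : ZMod N)) * X ^ j with hu
  set P : ℤ[X] := ∑ i ∈ Finset.range N, C (s (i : ZMod N)) * X ^ i with hP
  set f : ℤ[X] := X ^ N - 1 with hf
  have hmonic : f.Monic := by
    simpa using monic_X_pow_sub_C (1 : ℤ) (NeZero.ne N)
  -- the root and its key property
  set R := AdjoinRoot f
  set ω : R := AdjoinRoot.root f with hω
  have hωN : ω ^ N = 1 := by
    have h0 : AdjoinRoot.mk f f = 0 := AdjoinRoot.mk_self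
    rw [hf, map_sub, map_pow, AdjoinRoot.mk_X, _root_.map_one, sub_eq_zero] at h0
    exact h0
  have epow : ∀ i j : ZMod N, ω ^ (ZMod.val i) * ω ^ (ZMod.val j) = ω ^ (ZMod.val (i + j)) := by
    intro i j
    rw [← pow_add]
    have h1 : ZMod.val i + ZMod.val j
        = ZMod.val (i + j) + N * ((ZMod.val i + ZMod.val j) / N) := by
      rw [ZMod.val_add]; exact (Nat.mod_add_div _ _).symm
    rw [h1, pow_add, pow_mul, hωN, one_pow, mul_one]
  -- the key congruence
  have hdvd : f ∣ u * P - C d := by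
    rw [← AdjoinRoot.mk_eq_zero, map_sub, sub_eq_zero, _root_.map_mul, AdjoinRoot.mk_C,
      hu, hP, aux_mk_sum, aux_mk_sum]
    rw [Finset.sum_mul_sum]
    have hterm : ∀ j k : ZMod N,
        (algebraMap ℤ R (a j) * ω ^ (ZMod.val j)) * (algebraMap ℤ R (s k) * ω ^ (ZMod.val k))
          = algebraMap ℤ R (a j * s k) * ω ^ (ZMod.val (j + k)) := by
      intro j k
      rw [_root_.map_mul]
      rw [← epow]
      ring
    calc (∑ j : ZMod N, ∑ k : ZMod N,
            (algebraMap ℤ R (a j) * ω ^ (ZMod.val j)) * (algebraMap ℤ R (s k) * ω ^ (ZMod.val k)))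
        = ∑ j : ZMod N, ∑ m : ZMod N, algebraMap ℤ R (a j * s (m - j)) * ω ^ (ZMod.val m) := by
          refine Finset.sum_congr rfl fun j _ => ?_
          rw [Fintype.sum_equiv (Equiv.addLeft j)
            (fun k => (algebraMap ℤ R (a j) * ω ^ (ZMod.val j)) *
              (algebraMap ℤ R (s k) * ω ^ (ZMod.val k)))
            (fun m => algebraMap ℤ R (a j * s (m - j)) * ω ^ (ZMod.val m))]
          intro k
          rw [hterm]
          simp [Equiv.addLeft]
      _ = ∑ m : ZMod N, algebraMap ℤ R (∑ j : ZMod N, s (m - j) * a j) * ω ^ (ZMod.val m) := by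
          rw [Finset.sum_comm]
          refine Finset.sum_congr rfl fun m _ => ?_
          rw [map_sum, Finset.sum_mul]
          refine Finset.sum_congr rfl fun j _ => ?_
          rw [mul_comm (a j) (s (m - j))]
      _ = algebraMap ℤ R d := by
          have hma : ∀ m : ZMod N, (∑ j : ZMod N, s (m - j) * a j)
              = (A * A.adjugate) m 0 := by
            intro m
            rw [Matrix.mul_apply]
            refine Finset.sum_congr rfl fun j _ => ?_
            rw [hA, Matrix.circulant_apply]
          have hadj : A * A.adjugate = d • (1 : Matrix (ZMod N) (ZMod N) ℤ) :=
            Matrix.mul_adjugate A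
          rw [Finset.sum_congr rfl fun m _ => by rw [hma m, hadj]]
          rw [Fintype.sum_eq_single (0 : ZMod N)]
          · simp [ZMod.val_zero]
          · intro m hm
            simp [Matrix.smul_apply, Matrix.one_apply, hm]
  -- extract v
  set v : ℤ[X] := (u * P - C d) /ₘ f with hv
  have heq : u * P - C d = f * v := by
    have := modByMonic_add_div (u * P - C d) f
    rw [(modByMonic_eq_zero_iff_dvd hmonic).2 hdvd, zero_add] at this
    exact this.symm
  have hdegu : u.natDegree ≤ N - 1 := by
    refine natDegree_sum_le_of_forall_le _ _ fun j hj => ?_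
    have := Finset.mem_range.1 hj
    exact le_trans (natDegree_C_mul_X_pow_le _ _) (by omega)
  have hdegP : P.natDegree ≤ N - 1 := by
    refine natDegree_sum_le_of_forall_le _ _ fun i hi => ?_
    have := Finset.mem_range.1 hi
    exact le_trans (natDegree_C_mul_X_pow_le _ _) (by omega)
  have hdegq : (u * P - C d).natDegree ≤ 2 * N - 2 := by
    refine le_trans (natDegree_sub_le _ _) (max_le ?_ ?_)
    · exact le_trans (natDegree_mul_le) (by omega)
    · rw [natDegree_C]; omega
  have hdegv : v.natDegree ≤ N - 2 := by
    rw [hv, natDegree_divByMonic _ hmonic]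
    have : f.natDegree = N := by rw [hf]; simpa using (natDegree_X_pow_sub_C (n := N) (r := (1:ℤ)))
    omega
  refine ⟨u, v, hdegu, hdegv, ?_⟩
  have : v * (1 - X ^ N) = C d - u * P := by
    rw [hf] at heq
    linear_combination heq
  rw [this]; ring
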